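/- arXiv:1310.3479 — 2 statements merged into one kernel-verified Lean document; each statement's English description precedes it below -/
import Mathlib

section
/- Let A be a k-algebra and e ∈ A an idempotent. If the right A-module A/AeA admits a projective resolution all of whose components in positive degrees (i.e., except degree 0) lie in add(eA), then Tor_i^A(A/AeA, A/AeA) = 0 for all i > 0; in particular the canonical surjection A → A/AeA is a homological ring epimorphism and AeA is a stratifying ideal. -/
open CategoryTheory MulOpposite
open CategoryTheory.Limits

/-- For a right `A`-module `M` (i.e. a module over `Aᵐᵒᵖ`) and a (two-sided) ideal,
represented by the ideal `J` of `Aᵐᵒᵖ`, the map induced by a morphism `f : M ⟶ N`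
on the quotients `M ⧸ M·J → N ⧸ N·J`; these quotients compute `M ⊗_A (A ⧸ J)`. -/
noncomputable def torQuotMap {A : Type} [Ring A] (J : Ideal Aᵐᵒᵖ)
    {M N : ModuleCat Aᵐᵒᵖ} (f : M ⟶ N) :
    (M ⧸ (J • (⊤ : Submodule Aᵐᵒᵖ M))) →ₗ[Aᵐᵒᵖ] (N ⧸ (J • (⊤ : Submodule Aᵐᵒᵖ N))) :=
  Submodule.mapQ _ _ f.hom (Submodule.smul_le.mpr fun r hr m _ =>
    Submodule.mem_comap.mpr (by
      rw [map_smul]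
      exact Submodule.smul_mem_smul hr Submodule.mem_top))

lemma torQuotMap_mk {A : Type} [Ring A] (J : Ideal Aᵐᵒᵖ)
    {M N : ModuleCat Aᵐᵒᵖ} (f : M ⟶ N) (x : M) :
    torQuotMap J f (Submodule.Quotient.mk x) = Submodule.Quotient.mk (f x) :=
  Submodule.mapQ_apply _ _ f.hom x

noncomputable def torQuotFunctor {A : Type} [Ring A] (J : Ideal Aᵐᵒᵖ) :
    ModuleCat Aᵐᵒᵖ ⥤ ModuleCat Aᵐᵒᵖ where
  obj M := ModuleCat.of _ (M ⧸ (J • (⊤ : Submodule Aᵐᵒᵖ M)))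
  map f := ModuleCat.ofHom (torQuotMap J f)
  map_id M := by
    ext x
    simp [torQuotMap_mk]
  map_comp f g := by
    ext x
    simp [torQuotMap_mk]

instance {A : Type} [Ring A] (J : Ideal Aᵐᵒᵖ) : (torQuotFunctor J).Additive where
  map_add {M N f g} := by
    ext x
    obtain ⟨x, rfl⟩ := Submodule.Quotient.mk_surjective _ x
    simp [torQuotFunctor, torQuotMap_mk]
    rfl

lemma pi_smul_top {A : Type} [Ring A] (e : A) (he : IsIdempotentElem e)
    (J : Ideal Aᵐᵒᵖ)
    (hJ : J = Ideal.span (Set.range fun p : A × A => op (p.1 * e * p.2))) (m : ℕ) :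
    (J • (⊤ : Submodule Aᵐᵒᵖ (Fin m → (Submodule.span Aᵐᵒᵖ ({e} : Set A))))) = ⊤ := by
  rw [eq_top_iff]
  intro v _
  rw [← Finset.univ_sum_single v]
  refine Submodule.sum_mem _ fun i _ => ?_
  obtain ⟨a, ha⟩ := Submodule.mem_span_singleton.mp (v i).2
  have hmem : op (e * unop a) ∈ J := by
    rw [hJ]
    exact Ideal.subset_span ⟨(1, unop a), by simp⟩
  have hvi : v i = (op (e * unop a)) •
      (⟨e, Submodule.mem_span_singleton_self e⟩ : Submodule.span Aᵐᵒᵖ ({e} : Set A)) := by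
    apply Subtype.ext
    show (v i : A) = e * (e * unop a)
    rw [← mul_assoc, he, ← ha]
    rfl
  rw [hvi, Pi.single_smul]
  exact Submodule.smul_mem_smul hmem Submodule.mem_top

/-- if `A/AeA` admits a projective resolution (as a right `A`-module)
whose components in positive degrees lie in `add (eA)`, then
`Tor_i^A(A/AeA, A/AeA) = 0` for all `i > 0`: for every projective resolution `Q` of
`A/AeA`, the complex obtained by applying `- ⊗_A A/AeA` (i.e. taking the quotients by
`J = AeA`) is exact in all positive degrees. -/
theorem stmt1 {k A : Type} [CommRing k] [Ring A] [Algebra k A]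
    (e : A) (he : IsIdempotentElem e)
    (J : Ideal Aᵐᵒᵖ)
    (hJ : J = Ideal.span (Set.range fun p : A × A => op (p.1 * e * p.2)))
    (hres : ∃ P : ProjectiveResolution
        (ModuleCat.of Aᵐᵒᵖ (A ⧸ (J • (⊤ : Submodule Aᵐᵒᵖ A)))),
      ∀ n : ℕ, 0 < n →
        ∃ (m : ℕ)
          (r : P.complex.X n →ₗ[Aᵐᵒᵖ] (Fin m → (Submodule.span Aᵐᵒᵖ ({e} : Set A))))
          (s : (Fin m → (Submodule.span Aᵐᵒᵖ ({e} : Set A))) →ₗ[Aᵐᵒᵖ] P.complex.X n),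
          s.comp r = LinearMap.id) :
    ∀ (Q : ProjectiveResolution
        (ModuleCat.of Aᵐᵒᵖ (A ⧸ (J • (⊤ : Submodule Aᵐᵒᵖ A))))) (i : ℕ),
      Function.Exact (torQuotMap J (Q.complex.d (i + 2) (i + 1)))
        (torQuotMap J (Q.complex.d (i + 1) i)) := by
  obtain ⟨P, hP⟩ := hres
  set F := torQuotFunctor (A := A) J with hF
  have hzero : ∀ n : ℕ, 0 < n →
      IsZero ((F.leftDerived n).obj
        (ModuleCat.of Aᵐᵒᵖ (A ⧸ (J • (⊤ : Submodule Aᵐᵒᵖ A))))) := by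
    intro n hn
    obtain ⟨m, r, s, hsr⟩ := hP n hn
    have hs : Function.Surjective s := fun x =>
      ⟨r x, by rw [← LinearMap.comp_apply, hsr]; rfl⟩
    have htop : (J • (⊤ : Submodule Aᵐᵒᵖ (P.complex.X n))) = ⊤ := by
      refine le_antisymm le_top ?_
      calc (⊤ : Submodule Aᵐᵒᵖ (P.complex.X n))
          = Submodule.map s ⊤ := by
            rw [Submodule.map_top, LinearMap.range_eq_top.mpr hs]
        _ = Submodule.map s (J • ⊤) := by rw [pi_smul_top e he J hJ m]
        _ = J • Submodule.map s ⊤ := Submodule.map_smul'' _ _ _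
        _ ≤ J • ⊤ := Submodule.smul_mono le_rfl le_top
    have hsub : Subsingleton
        ((P.complex.X n) ⧸ (J • (⊤ : Submodule Aᵐᵒᵖ (P.complex.X n)))) :=
      Submodule.Quotient.subsingleton_iff.mpr htop
    have hX : IsZero (F.obj (P.complex.X n)) := @ModuleCat.isZero_of_subsingleton _ _ _ hsub
    set K := (F.mapHomologicalComplex (ComplexShape.down ℕ)).obj P.complex with hK
    have hexact : K.ExactAt n := by
      rw [HomologicalComplex.exactAt_iff]
      exact ShortComplex.exact_of_isZero_X₂ _ hX
    have hhom : IsZero (K.homology n) :=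
      (HomologicalComplex.exactAt_iff_isZero_homology _ _).mp hexact
    exact hhom.of_iso (P.isoLeftDerivedObj F n)
  intro Q i
  set L := (F.mapHomologicalComplex (ComplexShape.down ℕ)).obj Q.complex with hL
  have h1 : IsZero (L.homology (i + 1)) :=
    (hzero (i + 1) (Nat.succ_pos i)).of_iso (Q.isoLeftDerivedObj F (i + 1)).symm
  have h2 : L.ExactAt (i + 1) :=
    (HomologicalComplex.exactAt_iff_isZero_homology _ _).mpr h1
  have h3 : (L.sc' (i + 2) (i + 1) i).Exact :=
    (HomologicalComplex.exactAt_iff' L (i + 2) (i + 1) i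
      (by simp [ChainComplex.prev]) (ChainComplex.next_nat_succ i)).mp h2
  rw [ShortComplex.moduleCat_exact_iff_range_eq_ker] at h3
  exact LinearMap.exact_iff.mpr h3.symm
end

section
/- Let k be a field, A a finite-dimensional k-algebra, and P a right-bounded minimal complex of finitely generated projective A-modules. If for every finite-dimensional A-module S the total cohomology of RHom_A(P, S) is finite-dimensional, then P is isomorphic in the derived category to a bounded complex of finitely generated projectives, i.e., P ∈ K^b(proj A). -/
open CategoryTheory Limits

universe v

section Alg
variable {A : Type} [Ring A]

local notation "JJ" => Ideal.jacobson (⊥ : Ideal A)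

lemma jac_mul_right {x : A} (hx : x ∈ JJ) (r : A) : x * r ∈ JJ := by
  rw [Ideal.mem_jacobson_iff] at hx ⊢
  intro y
  obtain ⟨z, hz⟩ := hx (r * y)
  rw [Ideal.mem_bot] at hz
  refine ⟨1 - y*x*z*r, ?_⟩
  rw [Ideal.mem_bot]
  calc (1 - y*x*z*r) * y * (x*r) + (1 - y*x*z*r) - 1
      = y*x*r - y*x*(z*(r*y)*x + z - 1)*r - y*x*r := by noncomm_ring
    _ = 0 := by rw [hz]; noncomm_ring

variable {M : Type*} [AddCommGroup M] [Module A M]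

lemma jac_smul_map {N : Type*} [AddCommGroup N] [Module A N] (f : M →ₗ[A] N)
    {x : M} (hx : x ∈ ((JJ • ⊤ : Submodule A M) : Submodule A M)) :
    f x ∈ (JJ • ⊤ : Submodule A N) := by
  refine Submodule.smul_induction_on hx (fun r hr m _ => ?_) (fun m₁ m₂ h₁ h₂ => ?_)
  · rw [map_smul]
    exact Submodule.smul_mem_smul hr trivial
  · rw [map_add]; exact add_mem h₁ h₂

lemma jac_smul_quotient_eq_bot (x : A ⧸ (JJ • ⊤ : Submodule A A))
    (hx : x ∈ (JJ • ⊤ : Submodule A (A ⧸ (JJ • ⊤ : Submodule A A)))) : x = 0 := by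
  refine Submodule.smul_induction_on hx (fun r hr m _ => ?_) (fun m₁ m₂ h₁ h₂ => by
    rw [h₁, h₂, add_zero])
  obtain ⟨t, rfl⟩ := Submodule.mkQ_surjective _ m
  have : r • t ∈ (JJ • ⊤ : Submodule A A) := Submodule.smul_mem_smul hr trivial
  rw [← map_smul]
  exact (Submodule.Quotient.mk_eq_zero _).2 this

lemma jac_smul_ulift_quotient_eq_bot (x : ULift.{v} (A ⧸ (JJ • ⊤ : Submodule A A)))
    (hx : x ∈ (JJ • ⊤ : Submodule A (ULift.{v} (A ⧸ (JJ • ⊤ : Submodule A A))))) : x = 0 := by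
  have h1 : (ULift.moduleEquiv : ULift.{v} (A ⧸ (JJ • ⊤ : Submodule A A)) ≃ₗ[A] _).toLinearMap x
      ∈ (JJ • ⊤ : Submodule A (A ⧸ (JJ • ⊤ : Submodule A A))) := jac_smul_map _ hx
  have h2 := jac_smul_quotient_eq_bot _ h1
  have : x.down = 0 := h2
  cases x
  simpa [ULift.ext_iff] using this

lemma mem_jac_smul_span {ι : Type*} (f : ι → M) (x : M)
    (hx : x ∈ (JJ • Submodule.span A (Set.range f))) :
    ∃ a : ι →₀ A, (∀ i, a i ∈ JJ) ∧ (a.sum fun i c => c • f i) = x := by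
  refine Submodule.smul_induction_on hx (fun r hr m hm => ?_) (fun m₁ m₂ h₁ h₂ => ?_)
  · obtain ⟨c, hc⟩ := (Finsupp.mem_span_range_iff_exists_finsupp).1 hm
    refine ⟨r • c, fun i => ?_, ?_⟩
    · rw [Finsupp.smul_apply, smul_eq_mul]
      exact jac_mul_right hr (c i)
    · rw [Finsupp.sum_smul_index' (fun i => zero_smul A (f i))]
      rw [← hc, Finsupp.smul_sum]
      exact Finset.sum_congr rfl (fun i _ => (mul_smul r (c i) (f i)))
  · obtain ⟨a₁, ha₁, rfl⟩ := h₁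
    obtain ⟨a₂, ha₂, rfl⟩ := h₂
    refine ⟨a₁ + a₂, fun i => ?_, ?_⟩
    · simpa using add_mem (ha₁ i) (ha₂ i)
    · rw [Finsupp.sum_add_index' (fun i => zero_smul A (f i)) (fun i b₁ b₂ => add_smul b₁ b₂ (f i))]

/-- Noncommutative Nakayama lemma. -/
lemma nakayama_subsingleton [Module.Finite A M]
    (h : (⊤ : Submodule A M) ≤ (JJ • ⊤ : Submodule A M)) : Subsingleton M := by
  obtain ⟨n, f, hf⟩ := Module.Finite.exists_fin (R := A) (M := M)
  induction n with
  | zero =>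
    have : ∀ x : M, x = 0 := by
      intro x
      have : x ∈ Submodule.span A (Set.range f) := hf ▸ Submodule.mem_top
      simpa [Set.range_eq_empty, Submodule.span_empty] using this
    exact ⟨fun a b => by rw [this a, this b]⟩
  | succ n ih =>
    set x := f (Fin.last n) with hx
    have hmem : x ∈ (JJ • Submodule.span A (Set.range f)) := by
      rw [hf]; exact h trivial
    obtain ⟨a, ha, hsum⟩ := mem_jac_smul_span f x hmem
    have hsum' : ∑ i : Fin (n+1), a i • f i = x := by
      rw [← hsum, Finsupp.sum_fintype]
      exact fun i => zero_smul A (f i)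
    obtain ⟨z, hz⟩ := Ideal.mem_jacobson_iff.1 (neg_mem (ha (Fin.last n))) 1
    rw [Ideal.mem_bot] at hz
    have h1 : z * (1 - a (Fin.last n)) = 1 := by
      calc z * (1 - a (Fin.last n)) = z * 1 * (-(a (Fin.last n))) + z - 1 + 1 := by noncomm_ring
        _ = 1 := by rw [hz, zero_add]
    have hz' : z • ((1 - a (Fin.last n)) • x) = x := by
      rw [smul_smul, h1, one_smul]
    have hxeq : x = (∑ i : Fin n, a i.castSucc • f i.castSucc) + a (Fin.last n) • x := by
      conv_lhs => rw [← hsum']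
      rw [Fin.sum_univ_castSucc]
    have hdec : (1 - a (Fin.last n)) • x = ∑ i : Fin n, a i.castSucc • f i.castSucc := by
      rw [sub_smul, one_smul]
      nth_rewrite 1 [hxeq]
      exact add_sub_cancel_right _ _
    have hxmem : x ∈ Submodule.span A (Set.range (f ∘ Fin.castSucc)) := by
      rw [← hz', hdec]
      exact Submodule.smul_mem _ z (Submodule.sum_mem _ fun i _ =>
        Submodule.smul_mem _ _ (Submodule.subset_span ⟨i, rfl⟩))
    have htop : Submodule.span A (Set.range (f ∘ Fin.castSucc)) = ⊤ := by
      rw [eq_top_iff, ← hf, Submodule.span_le]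
      rintro _ ⟨i, rfl⟩
      induction i using Fin.lastCases with
      | last => exact hxmem
      | cast i => exact Submodule.subset_span ⟨i, rfl⟩
    exact ih (f ∘ Fin.castSucc) htop

/-- A finitely generated projective module all of whose maps to `A ⧸ (J • ⊤)` (vanishing on
`J • ⊤`) are zero must be zero. -/
lemma isZero_of_hom_to_top_quotient_eq_zero (M : ModuleCat.{v} A)
    (hMp : Module.Projective A M) (hMf : Module.Finite A M)
    (hall : ∀ u : M ⟶ ModuleCat.of A (ULift.{v} (A ⧸ (JJ • ⊤ : Submodule A A))),
      (∀ x ∈ (JJ • ⊤ : Submodule A M), u x = 0) → u = 0) :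
    IsZero M := by
  obtain ⟨n, π, hπ⟩ := Module.Finite.exists_fin' A M
  obtain ⟨s, hs⟩ := Module.projective_lifting_property π LinearMap.id hπ
  have hcoord : ∀ (jj : Fin n) (x : M), s x jj ∈ (JJ • ⊤ : Submodule A A) := by
    intro jj x
    set w : M →ₗ[A] ULift.{v} (A ⧸ (JJ • ⊤ : Submodule A A)) :=
      (ULift.moduleEquiv.symm.toLinearMap).comp
        ((Submodule.mkQ (JJ • ⊤ : Submodule A A)).comp ((LinearMap.proj jj).comp s)) with hw
    have hzero : (ModuleCat.ofHom w : M ⟶ ModuleCat.of A (ULift.{v} (A ⧸ (JJ • ⊤ : Submodule A A)))) = 0 := by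
      refine hall _ (fun y hy => ?_)
      have hyy : (LinearMap.proj jj).comp s y ∈ (JJ • ⊤ : Submodule A A) :=
        jac_smul_map ((LinearMap.proj jj).comp s) hy
      show w y = 0
      rw [hw]
      simp only [LinearMap.comp_apply, Submodule.mkQ_apply]
      have hmk : Submodule.Quotient.mk ((LinearMap.proj jj : (Fin n → A) →ₗ[A] A) (s y))
          = (0 : A ⧸ (JJ • ⊤ : Submodule A A)) :=
        (Submodule.Quotient.mk_eq_zero _).2 (by simpa [LinearMap.comp_apply] using hyy)
      rw [hmk]
      exact map_zero _
    have h0 : w x = 0 := LinearMap.congr_fun (congrArg ModuleCat.Hom.hom hzero) x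
    rw [hw] at h0
    simp only [LinearMap.comp_apply, LinearMap.zero_apply, Submodule.mkQ_apply] at h0
    have h0' := congrArg (ULift.moduleEquiv (R := A)) h0
    simp only [LinearEquiv.apply_symm_apply, map_zero] at h0'
    rwa [← Submodule.Quotient.mk_eq_zero (JJ • ⊤ : Submodule A A)]
  have hmem : ∀ x : M, x ∈ (JJ • ⊤ : Submodule A M) := by
    intro x
    have h1 : s x ∈ (JJ • ⊤ : Submodule A (Fin n → A)) := by
      have hrepr : s x = ∑ jj : Fin n, Pi.single jj (s x jj) := by
        rw [Finset.univ_sum_single]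
      rw [hrepr]
      refine Submodule.sum_mem _ fun jj _ => ?_
      have := jac_smul_map (LinearMap.single A (fun _ => A) jj) (hcoord jj x)
      simpa using this
    have h2 : π (s x) ∈ (JJ • ⊤ : Submodule A M) := jac_smul_map π h1
    have h3 : π (s x) = x := by
      have := LinearMap.congr_fun hs x
      simpa using this
    rwa [h3] at h2
  haveI : Subsingleton M := nakayama_subsingleton (fun x _ => hmem x)
  exact ModuleCat.isZero_of_subsingleton M

end Alg

section PH
variable {A : Type} [Ring A]

/-- Partial homotopy against an exact complex, for a bounded-above complex of projectives. -/
lemma partial_homotopy (P Zc : CochainComplex (ModuleCat.{v} A) ℤ) (b : ℤ)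
    (hb : ∀ j : ℤ, b < j → IsZero (P.X j)) (hproj : ∀ j : ℤ, Module.Projective A (P.X j))
    (hex : ∀ n : ℤ, Zc.ExactAt n) (g : P ⟶ Zc) (i : ℤ) :
    ∃ H : ∀ j : ℤ, (P.X (j+1) ⟶ Zc.X j), ∀ j : ℤ, i ≤ j →
      g.f (j+1) = H j ≫ Zc.d j (j+1) + P.d (j+1) (j+1+1) ≫ H (j+1) := by
  set Claim : ℤ → Prop := fun i => ∃ H : ∀ j : ℤ, (P.X (j+1) ⟶ Zc.X j), ∀ j : ℤ, i ≤ j →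
      g.f (j+1) = H j ≫ Zc.d j (j+1) + P.d (j+1) (j+1+1) ≫ H (j+1) with hClaim
  suffices hc : ∀ i : ℤ, Claim i from hc i
  have base : Claim b := by
    refine ⟨fun _ => 0, fun j hj => ?_⟩
    have h1 : IsZero (P.X (j+1)) := hb _ (by omega)
    exact h1.eq_of_src _ _
  have step : ∀ i : ℤ, Claim (i+1) → Claim i := by
    intro i ⟨H, hH⟩
    have hH1 := hH (i+1) le_rfl
    set gm : P.X (i+1) ⟶ Zc.X (i+1) := g.f (i+1) - P.d (i+1) (i+1+1) ≫ H (i+1) with hgm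
    have hswap : H (i+1) ≫ Zc.d (i+1) (i+1+1)
        = g.f (i+1+1) - P.d (i+1+1) (i+1+1+1) ≫ H (i+1+1) := by
      rw [hH1]; abel
    have hg0 : gm ≫ Zc.d (i+1) (i+1+1) = 0 := by
      rw [hgm, Preadditive.sub_comp, Category.assoc, hswap, Preadditive.comp_sub,
        g.comm (i+1) (i+1+1)]
      simp
    have hexact := (Zc.exactAt_iff' i (i+1) (i+1+1)
      (by rw [CochainComplex.prev]; omega) (by rw [CochainComplex.next])).1 (hex (i+1))
    have hrk : LinearMap.range (Zc.d i (i+1)).hom = LinearMap.ker (Zc.d (i+1) (i+1+1)).hom :=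
      hexact.moduleCat_range_eq_ker
    have hmem : ∀ x : P.X (i+1), gm x ∈ LinearMap.range (Zc.d i (i+1)).hom := by
      intro x
      rw [hrk, LinearMap.mem_ker]
      have := congrArg (fun f => ModuleCat.Hom.hom f x) hg0
      simpa using this
    haveI := hproj (i+1)
    obtain ⟨h, hh⟩ := Module.projective_lifting_property
      ((Zc.d i (i+1)).hom.rangeRestrict)
      (LinearMap.codRestrict (LinearMap.range (Zc.d i (i+1)).hom) gm.hom hmem)
      (LinearMap.surjective_rangeRestrict _)
    have hhd : (ModuleCat.ofHom h : P.X (i+1) ⟶ Zc.X i) ≫ Zc.d i (i+1) = gm := by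
      ext x
      have := congrFun (congrArg (DFunLike.coe) hh) x
      exact congrArg Subtype.val this
    refine ⟨fun j => if hj : j = i then
        (eqToHom (by rw [hj]) : P.X (j+1) ⟶ P.X (i+1)) ≫ (ModuleCat.ofHom h : P.X (i+1) ⟶ Zc.X i) ≫ (eqToHom (by rw [hj]))
      else H j, fun j hj => ?_⟩
    dsimp only
    rcases eq_or_lt_of_le hj with rfl | hlt
    · rw [dif_pos rfl, dif_neg (show (i:ℤ)+1 ≠ i by omega)]
      simp only [eqToHom_refl, Category.comp_id, Category.id_comp]
      rw [hhd, hgm]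
      abel
    · rw [dif_neg (show j ≠ i by omega), dif_neg (show j+1 ≠ i by omega)]
      exact hH j (by omega)
  have main : ∀ n : ℕ, Claim (b - n) := by
    intro n
    induction n with
    | zero => simpa using base
    | succ n ih =>
      have e : b - ((n+1 : ℕ) : ℤ) + 1 = b - n := by push_cast; ring
      exact step _ (by rw [e]; exact ih)
  intro i
  obtain ⟨H, hH⟩ := main ((b - i).toNat)
  exact ⟨H, fun j hj => hH j (by omega)⟩

/-- Reindexed corollary of `partial_homotopy`. -/
lemma partial_homotopy' (P Zc : CochainComplex (ModuleCat.{v} A) ℤ) (b : ℤ)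
    (hb : ∀ j : ℤ, b < j → IsZero (P.X j)) (hproj : ∀ j : ℤ, Module.Projective A (P.X j))
    (hex : ∀ n : ℤ, Zc.ExactAt n) (g : P ⟶ Zc) (i' i : ℤ) (hii : i' + 1 = i) :
    ∃ (h : P.X i ⟶ Zc.X i') (h' : P.X (i+1) ⟶ Zc.X i),
      g.f i = h ≫ Zc.d i' i + P.d i (i+1) ≫ h' := by
  subst hii
  obtain ⟨H, hH⟩ := partial_homotopy P Zc b hb hproj hex g i'
  exact ⟨H i', H (i'+1), hH i' le_rfl⟩

end PH

/-- A complex representing an object of `K^b(proj A)`: a bounded complex of finitely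
generated projective modules. -/
def IsKbProjComplex (A : Type) [Ring A] (Q : CochainComplex (ModuleCat A) ℤ) : Prop :=
  (∀ i : ℤ, Projective (Q.X i) ∧ Module.Finite A (Q.X i)) ∧
  ∃ a b : ℤ, ∀ i : ℤ, (i < a ∨ b < i) → IsZero (Q.X i)

/-- let `A` be a finite-dimensional algebra over a field `k` and `P`
a right-bounded minimal complex of finitely generated projective `A`-modules (the image
of each differential is contained in the radical of its target). If for every
finite-dimensional `A`-module `S` the total cohomology of `RHom_A(P, S)` is
finite-dimensional — equivalently, since the components of `P` are finitely generated
and `S` is finite-dimensional, `Hom_{D(Mod A)}(P, S[n]) = 0` for all but finitely many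
`n` — then `P` is isomorphic in the derived category to a bounded complex of finitely
generated projectives, i.e. `P ∈ K^b(proj A)`. -/
theorem stmt11 (k A : Type) [Field k] [Ring A] [Algebra k A] [FiniteDimensional k A]
    [HasDerivedCategory (ModuleCat A)]
    (P : CochainComplex (ModuleCat A) ℤ)
    (hbdd : ∃ b : ℤ, ∀ i : ℤ, b < i → IsZero (P.X i))
    (hproj : ∀ i : ℤ, Projective (P.X i) ∧ Module.Finite A (P.X i))
    (hmin : ∀ i : ℤ, LinearMap.range (P.d i (i + 1)).hom ≤
      (Ideal.jacobson (⊥ : Ideal A)) • (⊤ : Submodule A (P.X (i + 1))))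
    (hfin : ∀ S : ModuleCat A, Module.Finite A S →
      ∃ N : ℕ, ∀ n : ℤ, (N : ℤ) < |n| →
        ∀ f : DerivedCategory.Q.obj P ⟶
          ((DerivedCategory.singleFunctor (ModuleCat A) 0).obj S)⟦n⟧, f = 0) :
    ∃ Q : CochainComplex (ModuleCat A) ℤ, IsKbProjComplex A Q ∧
      Nonempty (DerivedCategory.Q.obj P ≅ DerivedCategory.Q.obj Q) := by
  classical
  obtain ⟨b, hb⟩ := hbdd
  set J := Ideal.jacobson (⊥ : Ideal A) with hJdef
  haveI : Module.Finite A (A ⧸ (J • ⊤ : Submodule A A)) :=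
    Module.Finite.of_surjective _ (Submodule.mkQ_surjective (J • ⊤ : Submodule A A))
  haveI : Module.Finite A (ULift (A ⧸ (J • ⊤ : Submodule A A))) :=
    Module.Finite.equiv ULift.moduleEquiv.symm
  set S := ModuleCat.of A (ULift (A ⧸ (J • ⊤ : Submodule A A))) with hSdef
  obtain ⟨N, hN⟩ := hfin S
    (inferInstanceAs (Module.Finite A (ULift (A ⧸ (J • ⊤ : Submodule A A)))))
  have hprojmod : ∀ j : ℤ, Module.Projective A (P.X j) := by
    intro j
    have := (hproj j).1
    exact (IsProjective.iff_projective (P.X j)).2 this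
  refine ⟨P, ⟨hproj, -(N:ℤ), b, fun i hi => ?_⟩, ⟨Iso.refl _⟩⟩
  rcases hi with hi | hi
  swap
  · exact hb i hi
  by_cases hib : b < i
  · exact hb i hib
  push_neg at hib
  haveI : Module.Finite A (P.X i) := (hproj i).2
  -- it suffices to show every map to `S` vanishing on `J • ⊤` is zero
  refine isZero_of_hom_to_top_quotient_eq_zero (P.X i) (hprojmod i) (hproj i).2 ?_
  intro u hu
  -- the chain map to the single complex
  have hchain : ∀ l : ℤ, (ComplexShape.up ℤ).Rel l i → P.d l i ≫ u = 0 := by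
    intro l hl
    have hl' : l + 1 = i := hl
    ext x : 2
    show u (P.d l i x) = 0
    refine hu _ ?_
    have := hmin l
    rw [hl'] at this
    exact this ⟨x, rfl⟩
  set φ := HomologicalComplex.mkHomToSingle u hchain with hφdef
  -- the target identification iso
  let e1 : ((DerivedCategory.singleFunctor (ModuleCat A) i).obj S : DerivedCategory (ModuleCat A))
      ≅ ((DerivedCategory.singleFunctor (ModuleCat A) 0).obj S)⟦(-i : ℤ)⟧ :=
    ((DerivedCategory.singleFunctors (ModuleCat A)).shiftIso (-i) i 0 (by omega)).symm.app S
  let e2 : DerivedCategory.Q.obj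
        ((HomologicalComplex.single (ModuleCat A) (ComplexShape.up ℤ) i).obj S)
      ≅ ((DerivedCategory.singleFunctor (ModuleCat A) i).obj S : DerivedCategory (ModuleCat A)) :=
    (DerivedCategory.quotientCompQhIso (ModuleCat A)).symm.app
      ((HomologicalComplex.single (ModuleCat A) (ComplexShape.up ℤ) i).obj S)
  have habs : (N : ℤ) < |(-i : ℤ)| := by
    rw [abs_neg, abs_of_neg (show i < 0 by omega)]
    omega
  have hvanish := hN (-i) habs (DerivedCategory.Q.map φ ≫ (e2 ≪≫ e1).hom)
  have hQφ : DerivedCategory.Q.map φ = 0 := by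
    calc DerivedCategory.Q.map φ
        = (DerivedCategory.Q.map φ ≫ (e2 ≪≫ e1).hom) ≫ (e2 ≪≫ e1).inv := by
          rw [Category.assoc, Iso.hom_inv_id, Category.comp_id]
      _ = 0 := by rw [hvanish, zero_comp]
  -- move to the homotopy category
  set qφ := (HomotopyCategory.quotient (ModuleCat A) (ComplexShape.up ℤ)).map φ with hqφ
  have hnat' : DerivedCategory.Qh.map qφ ≫
        (DerivedCategory.quotientCompQhIso (ModuleCat A)).hom.app _
      = (DerivedCategory.quotientCompQhIso (ModuleCat A)).hom.app P ≫ DerivedCategory.Q.map φ :=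
    (DerivedCategory.quotientCompQhIso (ModuleCat A)).hom.naturality φ
  have hQhφ : DerivedCategory.Qh.map qφ = 0 := by
    calc DerivedCategory.Qh.map qφ
        = (DerivedCategory.Qh.map qφ ≫
            (DerivedCategory.quotientCompQhIso (ModuleCat A)).hom.app _) ≫
            (DerivedCategory.quotientCompQhIso (ModuleCat A)).inv.app _ := by
          rw [Category.assoc, Iso.hom_inv_id_app]; exact (Category.comp_id _).symm
      _ = ((DerivedCategory.quotientCompQhIso (ModuleCat A)).hom.app P ≫
            DerivedCategory.Q.map φ) ≫
            (DerivedCategory.quotientCompQhIso (ModuleCat A)).inv.app _ := by rw [hnat']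
      _ = 0 := by rw [hQφ, comp_zero, zero_comp]
  obtain ⟨Zob, sfr, hsW, hcomp⟩ := (MorphismProperty.map_eq_iff_postcomp DerivedCategory.Qh
      (HomotopyCategory.subcategoryAcyclic (ModuleCat A)).trW qφ 0).1
      (by rw [hQhφ, Functor.map_zero])
  have hφs : qφ ≫ sfr = 0 := by rw [hcomp, zero_comp]
  obtain ⟨Zo3, g1, h1, hT, hP3⟩ := hsW
  set T := Pretriangulated.Triangle.mk sfr g1 h1 with hTdef
  obtain ⟨g', hg'⟩ := Pretriangulated.Triangle.coyoneda_exact₂ _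
      (Pretriangulated.inv_rot_of_distTriang T hT) qφ (by exact hφs)
  set Zc := ((Zo3⟦(-1:ℤ)⟧ :
      HomotopyCategory (ModuleCat A) (ComplexShape.up ℤ)).as) with hZc
  have hPM : (HomotopyCategory.subcategoryAcyclic (ModuleCat A)) (Zo3⟦(-1:ℤ)⟧) :=
    (HomotopyCategory.subcategoryAcyclic (ModuleCat A)).le_shift (-1) Zo3 hP3
  have hexZc : ∀ n : ℤ, Zc.ExactAt n :=
    (HomotopyCategory.quotient_obj_mem_subcategoryAcyclic_iff_exactAt Zc).1 hPM
  obtain ⟨g₀, hg₀⟩ := (HomotopyCategory.quotient (ModuleCat A)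
      (ComplexShape.up ℤ)).map_surjective (X := P) (Y := Zc) g'
  obtain ⟨m₀, hm₀⟩ := (HomotopyCategory.quotient (ModuleCat A)
      (ComplexShape.up ℤ)).map_surjective (X := Zc)
      (Y := (HomologicalComplex.single (ModuleCat A) (ComplexShape.up ℤ) i).obj S)
      (T.invRotate.mor₁)
  have heq : qφ = (HomotopyCategory.quotient (ModuleCat A) (ComplexShape.up ℤ)).map
      (g₀ ≫ m₀) := by
    rw [Functor.map_comp, hg₀, hm₀]; exact hg'
  have hht : Homotopy φ (g₀ ≫ m₀) := HomotopyCategory.homotopyOfEq _ _ heq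
  obtain ⟨hH, hH', hGood⟩ := partial_homotopy' P Zc b hb hprojmod hexZc g₀ (i-1) i (by omega)
  have hcomm := hht.comm i
  rw [dNext_eq hht.hom (show (ComplexShape.up ℤ).Rel i (i+1) by simp),
      prevD_eq hht.hom (show (ComplexShape.up ℤ).Rel (i-1) i by simp)] at hcomm
  simp only [HomologicalComplex.single_obj_d, comp_zero, add_zero,
    HomologicalComplex.comp_f] at hcomm
  rw [hGood] at hcomm
  have hzd : Zc.d (i-1) i ≫ m₀.f i = 0 := by
    have hc := m₀.comm (i-1) i
    rw [HomologicalComplex.single_obj_d, comp_zero] at hc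
    exact hc.symm
  have hφf : φ.f i = P.d i (i+1) ≫ (hht.hom (i+1) i + hH' ≫ m₀.f i) := by
    rw [hcomm]
    rw [Preadditive.add_comp, Category.assoc, Category.assoc, hzd, comp_zero,
      Preadditive.comp_add]
    abel
  set w : P.X (i+1) ⟶ S := (hht.hom (i+1) i + hH' ≫ m₀.f i) ≫
      (HomologicalComplex.singleObjXSelf (ComplexShape.up ℤ) i S).hom with hwdef
  have hu_eq : u = P.d i (i+1) ≫ w := by
    calc u = (u ≫ (HomologicalComplex.singleObjXSelf (ComplexShape.up ℤ) i S).inv) ≫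
          (HomologicalComplex.singleObjXSelf (ComplexShape.up ℤ) i S).hom := by simp
      _ = φ.f i ≫ (HomologicalComplex.singleObjXSelf (ComplexShape.up ℤ) i S).hom := by
          rw [← HomologicalComplex.mkHomToSingle_f u hchain]
      _ = P.d i (i+1) ≫ w := by rw [hφf, hwdef, Category.assoc]
  ext x : 2
  show u x = 0
  have h1 : P.d i (i+1) x ∈ (J • ⊤ : Submodule A (P.X (i+1))) := hmin i ⟨x, rfl⟩
  have h2 : u x = w (P.d i (i+1) x) := by rw [hu_eq]; rfl
  rw [h2]
  have h3 : w (P.d i (i+1) x) ∈ (J • ⊤ : Submodule A S) :=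
    jac_smul_map (w.hom : (P.X (i+1) : Type _) →ₗ[A] S) h1
  exact jac_smul_ulift_quotient_eq_bot _ h3
end
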